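/- Let b(x,y,z) be the unipotent upper triangular 3×3 matrix with entries b₁₂ = x, b₂₃ = y, b₁₃ = z + xy/2, and let 𝔞 ⊂ 𝔰𝔩₃(ℝ) be the diagonal traceless matrices. If (xₙ) → ∞ and (yₙ, zₙ + xₙyₙ/2) → (y, z) in ℝ², then the sequence of subalgebras Ad b(xₙ,yₙ,zₙ)(𝔞) converges in the Grassmannian of 2-planes of 𝔰𝔩₃(ℝ) to Ad b(0,y,z)(𝔩_α), where 𝔩_α = ℝ·diag(1/3,1/3,−2/3) ⊕ ℝE₁₂. -/

import Mathlib

open Matrix Filter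

noncomputable section

/-- Convergence of a sequence of subspaces (given as subsets of the ambient space) to a
limit subspace, in the Kuratowski sense; for subspaces of a fixed finite dimension this
is exactly convergence in the Grassmannian. -/
def GrLimit {M : Type*} [TopologicalSpace M] (W : ℕ → Set M) (L : Set M) : Prop :=
  (∀ v ∈ L, ∃ u : ℕ → M, (∀ n, u n ∈ W n) ∧ Tendsto u atTop (nhds v)) ∧
  (∀ φ : ℕ → ℕ, StrictMono φ → ∀ u : ℕ → M, (∀ n, u n ∈ W (φ n)) →
    ∀ v : M, Tendsto u atTop (nhds v) → v ∈ L)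

/-- Elementary matrix `Eᵢⱼ` in `M₃(ℝ)`. -/
def E (i j : Fin 3) : Matrix (Fin 3) (Fin 3) ℝ := Matrix.single i j 1

/-- `b(x,y,z)`: unipotent upper triangular with entries `x`, `y`, `z + xy/2`. -/
def bmat (x y z : ℝ) : Matrix (Fin 3) (Fin 3) ℝ :=
  !![1, x, z + x*y/2; 0, 1, y; 0, 0, 1]

/-- The Cartan subspace `𝔞` of diagonal traceless matrices, as a set. -/
def diagSet : Set (Matrix (Fin 3) (Fin 3) ℝ) :=
  {D | (∀ i j : Fin 3, i ≠ j → D i j = 0) ∧ Matrix.trace D = 0}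

/-- `H_β = diag(1/3, 1/3, -2/3)`. -/
def Hβ : Matrix (Fin 3) (Fin 3) ℝ := !![1/3, 0, 0; 0, 1/3, 0; 0, 0, -2/3]

def binv (x y z : ℝ) : Matrix (Fin 3) (Fin 3) ℝ :=
  !![1, -x, x*y/2 - z; 0, 1, -y; 0, 0, 1]
lemma bmat_mul_binv (x y z : ℝ) : bmat x y z * binv x y z = 1 := by
  ext i j
  fin_cases i <;> fin_cases j <;>
    simp [bmat, binv, Matrix.mul_apply, Fin.sum_univ_three, Matrix.vecMul, dotProduct, Matrix.one_apply,
      Matrix.vecHead, Matrix.vecTail] <;> ring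
lemma bmat_inv (x y z : ℝ) : (bmat x y z)⁻¹ = binv x y z :=
  Matrix.inv_eq_right_inv (bmat_mul_binv x y z)

lemma conj_mem (x y z : ℝ) {D : Matrix (Fin 3) (Fin 3) ℝ} (hD : D ∈ diagSet) :
    bmat x y z * D * (bmat x y z)⁻¹ =
    !![D 0 0, x*(D 1 1 - D 0 0), x*y*(D 0 0 - D 1 1) + (z+x*y/2)*(D 2 2 - D 0 0);
       0, D 1 1, y*(D 2 2 - D 1 1); 0, 0, D 2 2] := by
  have h01 : D 0 1 = 0 := hD.1 0 1 (by decide)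
  have h02 : D 0 2 = 0 := hD.1 0 2 (by decide)
  have h10 : D 1 0 = 0 := hD.1 1 0 (by decide)
  have h12 : D 1 2 = 0 := hD.1 1 2 (by decide)
  have h20 : D 2 0 = 0 := hD.1 2 0 (by decide)
  have h21 : D 2 1 = 0 := hD.1 2 1 (by decide)
  rw [bmat_inv]
  ext i j
  fin_cases i <;> fin_cases j <;>
    simp [bmat, binv, Matrix.mul_apply, Fin.sum_univ_three, Matrix.vecMul, dotProduct,
      Matrix.vecHead, Matrix.vecTail, h01, h02, h10, h12, h20, h21] <;> ring

lemma conj_lim (s t yl zl : ℝ) :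
    bmat 0 yl zl * (s • Hβ + t • E 0 1) * (bmat 0 yl zl)⁻¹ =
    !![s/3 - 0, t, -(yl*t) + zl*(-s + 0); 0, s/3 + 0, yl*(-s - 0); 0, 0, -(2*s)/3] := by
  rw [bmat_inv]
  ext i j
  fin_cases i <;> fin_cases j <;>
    simp [bmat, binv, Hβ, E, Matrix.mul_apply, Fin.sum_univ_three, Matrix.vecMul, dotProduct,
      Matrix.vecHead, Matrix.vecTail, Matrix.single] <;> ring

def Dmat (s e : ℝ) : Matrix (Fin 3) (Fin 3) ℝ :=
  !![s/3 - e, 0, 0; 0, s/3 + e, 0; 0, 0, -(2*s)/3]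

lemma Dmat_mem (s e : ℝ) : Dmat s e ∈ diagSet := by
  constructor
  · intro i j hij
    fin_cases i <;> fin_cases j <;> simp [Dmat, Matrix.vecHead, Matrix.vecTail] at hij ⊢
  · rw [Matrix.trace_fin_three]
    simp [Dmat]; ring


set_option maxHeartbeats 2000000 in
/-- If `xₙ → ∞` and `(yₙ, zₙ + xₙyₙ/2) → (y, z)`, then `Ad b(xₙ,yₙ,zₙ)(𝔞)` converges in
the Grassmannian to `Ad b(0,y,z)(𝔩_α)`, where `𝔩_α = ℝHβ ⊕ ℝE₁₂`. -/
theorem stmt5 (x y z : ℕ → ℝ) (yl zl : ℝ)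
    (hx : Tendsto (fun n => |x n|) atTop atTop)
    (hyz : Tendsto (fun n => (y n, z n + x n * y n / 2)) atTop (nhds (yl, zl))) :
    GrLimit
      (fun n => (fun X => bmat (x n) (y n) (z n) * X * (bmat (x n) (y n) (z n))⁻¹) '' diagSet)
      ((fun X => bmat 0 yl zl * X * (bmat 0 yl zl)⁻¹) ''
        {M | ∃ s t : ℝ, M = s • Hβ + t • E 0 1}) := by
  set w : ℕ → ℝ := fun n => z n + x n * y n / 2 with hw_def
  have hy : Tendsto y atTop (nhds yl) := by
    have := (continuous_fst.tendsto ((yl, zl) : ℝ × ℝ)).comp hyz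
    exact this
  have hw : Tendsto w atTop (nhds zl) := by
    have := (continuous_snd.tendsto ((yl, zl) : ℝ × ℝ)).comp hyz
    exact this
  have hXinv : Tendsto (fun n => (x n)⁻¹) atTop (nhds 0) := by
    have h1 : Tendsto (fun n => |x n|⁻¹) atTop (nhds 0) := tendsto_inv_atTop_zero.comp hx
    exact (tendsto_zero_iff_abs_tendsto_zero _).mpr (h1.congr fun n => (abs_inv _).symm)
  have hxne : ∀ᶠ n in atTop, x n ≠ 0 := by
    filter_upwards [hx.eventually_ge_atTop 1] with n hn
    intro h; rw [h] at hn; simp at hn; linarith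
  constructor
  · -- part 1
    rintro v ⟨X, ⟨s, t, rfl⟩, rfl⟩
    have he : Tendsto (fun n => t/(2*x n)) atTop (nhds 0) := by
      have := hXinv.const_mul (t/2)
      simp only [mul_zero] at this
      exact this.congr fun n => by ring
    refine ⟨fun n => bmat (x n) (y n) (z n) * Dmat s (t/(2*x n)) * (bmat (x n) (y n) (z n))⁻¹,
      fun n => ⟨_, Dmat_mem s _, rfl⟩, ?_⟩
    have goal_eq : (fun X => bmat 0 yl zl * X * (bmat 0 yl zl)⁻¹) (s • Hβ + t • E 0 1) =
        !![s/3 - 0, t, -(yl*t) + zl*(-s + 0); 0, s/3 + 0, yl*(-s - 0); 0, 0, -(2*s)/3] :=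
      conj_lim s t yl zl
    rw [goal_eq]
    apply Tendsto.congr' (f₁ := fun n =>
      !![s/3 - t/(2*x n), t, -(y n * t) + w n * (-s + t/(2*x n));
         0, s/3 + t/(2*x n), y n * (-s - t/(2*x n)); 0, 0, -(2*s)/3])
    · filter_upwards [hxne] with n hn
      rw [conj_mem _ _ _ (Dmat_mem s (t/(2*x n)))]
      ext i j
      fin_cases i <;> fin_cases j <;>
        simp only [Dmat, Matrix.cons_val', Matrix.cons_val_zero, Matrix.cons_val_one,
          Matrix.head_cons, Matrix.empty_val', Matrix.cons_val_fin_one, Matrix.head_fin_const,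
          Matrix.cons_val_two, Matrix.tail_cons, Matrix.of_apply, Matrix.vecHead,
          Matrix.vecTail, Fin.isValue, Fin.reduceFinMk, Fin.zero_eta, Fin.mk_one, Function.comp_apply,
          Fin.succ_zero_eq_one, Fin.succ_one_eq_two] <;>
        first
          | rfl
          | (field_simp
             ring)
    · refine tendsto_pi_nhds.2 fun i => tendsto_pi_nhds.2 fun j => ?_
      fin_cases i <;> fin_cases j <;>
        simp only [Matrix.cons_val', Matrix.cons_val_zero, Matrix.cons_val_one,
          Matrix.head_cons, Matrix.empty_val', Matrix.cons_val_fin_one, Matrix.head_fin_const,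
          Matrix.cons_val_two, Matrix.tail_cons, Fin.isValue]
      · exact tendsto_const_nhds.sub he
      · exact tendsto_const_nhds
      · exact ((hy.mul_const t).neg).add (hw.mul (tendsto_const_nhds.add he))
      · exact tendsto_const_nhds
      · exact tendsto_const_nhds.add he
      · exact hy.mul (tendsto_const_nhds.sub he)
      · exact tendsto_const_nhds
      · exact tendsto_const_nhds
      · exact tendsto_const_nhds
  · -- part 2
    rintro φ hφ u hu v hv
    simp only [Set.mem_image] at hu
    choose D hDmem hDeq using hu
    set a : ℕ → ℝ := fun n => D n 0 0 with ha_def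
    set b : ℕ → ℝ := fun n => D n 1 1 with hb_def
    set c : ℕ → ℝ := fun n => D n 2 2 with hc_def
    have hu_eq : ∀ n, u n =
        !![a n, x (φ n)*(b n - a n),
           x (φ n)*y (φ n)*(a n - b n) + (z (φ n)+x (φ n)*y (φ n)/2)*(c n - a n);
           0, b n, y (φ n)*(c n - b n); 0, 0, c n] := fun n => by
      rw [← hDeq n]; exact conj_mem _ _ _ (hDmem n)
    have hφt : Tendsto φ atTop atTop := hφ.tendsto_atTop
    have hent : ∀ i j : Fin 3, Tendsto (fun n => u n i j) atTop (nhds (v i j)) := by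
      intro i j
      exact tendsto_pi_nhds.1 (tendsto_pi_nhds.1 hv i) j
    have hyφ : Tendsto (fun n => y (φ n)) atTop (nhds yl) := hy.comp hφt
    have hwφ : Tendsto (fun n => z (φ n) + x (φ n) * y (φ n) / 2) atTop (nhds zl) := hw.comp hφt
    have hXinvφ : Tendsto (fun n => (x (φ n))⁻¹) atTop (nhds 0) := hXinv.comp hφt
    have hxneφ : ∀ᶠ n in atTop, x (φ n) ≠ 0 := hφt.eventually hxne
    have t00 : Tendsto a atTop (nhds (v 0 0)) :=
      (hent 0 0).congr fun n => by rw [hu_eq n]; rfl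
    have t11 : Tendsto b atTop (nhds (v 1 1)) :=
      (hent 1 1).congr fun n => by rw [hu_eq n]; rfl
    have t22 : Tendsto c atTop (nhds (v 2 2)) :=
      (hent 2 2).congr fun n => by rw [hu_eq n]; rfl
    have t01 : Tendsto (fun n => x (φ n)*(b n - a n)) atTop (nhds (v 0 1)) :=
      (hent 0 1).congr fun n => by rw [hu_eq n]; rfl
    have t12 : Tendsto (fun n => y (φ n)*(c n - b n)) atTop (nhds (v 1 2)) :=
      (hent 1 2).congr fun n => by rw [hu_eq n]; rfl
    have t02 : Tendsto (fun n =>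
        x (φ n)*y (φ n)*(a n - b n) + (z (φ n)+x (φ n)*y (φ n)/2)*(c n - a n))
        atTop (nhds (v 0 2)) :=
      (hent 0 2).congr fun n => by rw [hu_eq n]; rfl
    have z10 : v 1 0 = 0 :=
      tendsto_nhds_unique ((hent 1 0).congr fun n => by rw [hu_eq n]; rfl : Tendsto
        (fun _ : ℕ => (0:ℝ)) atTop (nhds (v 1 0))) tendsto_const_nhds
    have z20 : v 2 0 = 0 :=
      tendsto_nhds_unique ((hent 2 0).congr fun n => by rw [hu_eq n]; rfl : Tendsto
        (fun _ : ℕ => (0:ℝ)) atTop (nhds (v 2 0))) tendsto_const_nhds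
    have z21 : v 2 1 = 0 :=
      tendsto_nhds_unique ((hent 2 1).congr fun n => by rw [hu_eq n]; rfl : Tendsto
        (fun _ : ℕ => (0:ℝ)) atTop (nhds (v 2 1))) tendsto_const_nhds
    have hba : Tendsto (fun n => b n - a n) atTop (nhds 0) := by
      have h1 := t01.mul hXinvφ
      rw [mul_zero] at h1
      refine h1.congr' ?_
      filter_upwards [hxneφ] with n hn
      field_simp
    have e11 : v 1 1 = v 0 0 :=
      sub_eq_zero.mp (tendsto_nhds_unique (t11.sub t00) hba)
    have htr : ∀ n, a n + b n + c n = 0 := fun n => by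
      have := (hDmem n).2
      rwa [Matrix.trace_fin_three] at this
    have etr : v 0 0 + v 1 1 + v 2 2 = 0 :=
      tendsto_nhds_unique ((t00.add t11).add t22)
        (tendsto_const_nhds.congr fun n => (htr n).symm)
    have h22 : v 2 2 = -2 * v 0 0 := by linarith
    have e12 : v 1 2 = yl * (v 2 2 - v 1 1) :=
      tendsto_nhds_unique t12 (hyφ.mul (t22.sub t11))
    have e02 : v 0 2 = -(yl * v 0 1) + zl * (v 2 2 - v 0 0) := by
      refine tendsto_nhds_unique t02 ?_
      have h2 := ((hyφ.mul t01).neg).add (hwφ.mul (t22.sub t00))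
      exact h2.congr fun n => by ring
    refine ⟨(3*v 0 0) • Hβ + (v 0 1) • E 0 1, ⟨3*v 0 0, v 0 1, rfl⟩, ?_⟩
    have goal_eq : (fun X => bmat 0 yl zl * X * (bmat 0 yl zl)⁻¹)
        ((3*v 0 0) • Hβ + (v 0 1) • E 0 1) =
        !![(3*v 0 0)/3 - 0, v 0 1, -(yl*(v 0 1)) + zl*(-(3*v 0 0) + 0);
           0, (3*v 0 0)/3 + 0, yl*(-(3*v 0 0) - 0); 0, 0, -(2*(3*v 0 0))/3] :=
      conj_lim (3*v 0 0) (v 0 1) yl zl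
    rw [goal_eq]
    nth_rewrite 2 [Matrix.eta_fin_three v]
    rw [e11, h22, e12, e02, z10, z20, z21, e11, h22]
    ext i j
    fin_cases i <;> fin_cases j <;>
      simp [Matrix.vecHead, Matrix.vecTail] <;>
      first
        | ring1
        | exact z10.symm
        | exact z20.symm
        | exact z21.symm
        | exact e11.symm
        | linear_combination -e02 - zl*h22
        | linear_combination -e12 - yl*h22 + yl*e11
        | linear_combination -h22
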